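/- Let y_1,…,y_n be independent Gaussian random variables with y_i ~ N(μ_i, σ_i²), and let q > 0. Define L_i = 1 + #{j : y_i − y_j − q√(σ_i² + σ_j²) > 0} and U_i = n − #{j : y_i − y_j + q√(σ_i² + σ_j²) < 0}. Then the event {|（y_i − μ_i) − (y_j − μ_j)| ≤ q√(σ_i² + σ_j²) for all i ≠ j} implies the event {L_i ≤ l_i and u_i ≤ U_i for all i}, where l_i, u_i are the lower- and upper-ranks of μ. Hence P(∀i, [l_i, u_i] ⊆ [L_i, U_i]) ≥ P(∀ i ≠ j, |(y_i − μ_i) − (y_j − μ_j)| ≤ q√(σ_i² + σ_j²)). -/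

import Mathlib

open Finset MeasureTheory ProbabilityTheory

theorem tukey_rank_CIs_coverage (n : ℕ) (hn : 1 ≤ n) (μ σ : Fin n → ℝ)
    (hσ : ∀ i, 0 < σ i) {Ω : Type*} [MeasureSpace Ω] [IsProbabilityMeasure (ℙ : Measure Ω)]
    (y : Fin n → Ω → ℝ) (hmeas : ∀ i, Measurable (y i))
    (hindep : iIndepFun y ℙ)
    (hgauss : ∀ i, Measure.map (y i) ℙ = gaussianReal (μ i) ⟨σ i ^ 2, sq_nonneg _⟩)
    (q : ℝ) (hq : 0 < q) :
    (∀ ω : Ω,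
        (∀ i j : Fin n, i ≠ j →
            |(y i ω - μ i) - (y j ω - μ j)| ≤ q * Real.sqrt (σ i ^ 2 + σ j ^ 2)) →
          ∀ i : Fin n,
            (1 + (Finset.univ.filter
                (fun j => 0 < y i ω - y j ω - q * Real.sqrt (σ i ^ 2 + σ j ^ 2))).card ≤
              1 + (Finset.univ.filter (fun j => j ≠ i ∧ μ j < μ i)).card) ∧
            (n - (Finset.univ.filter (fun j => j ≠ i ∧ μ i ≤ μ j)).card ≤
              n - (Finset.univ.filter
                (fun j => y i ω - y j ω + q * Real.sqrt (σ i ^ 2 + σ j ^ 2) < 0)).card)) ∧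
    ℙ {ω : Ω | ∀ i : Fin n,
          (1 + (Finset.univ.filter
              (fun j => 0 < y i ω - y j ω - q * Real.sqrt (σ i ^ 2 + σ j ^ 2))).card ≤
            1 + (Finset.univ.filter (fun j => j ≠ i ∧ μ j < μ i)).card) ∧
          (n - (Finset.univ.filter (fun j => j ≠ i ∧ μ i ≤ μ j)).card ≤
            n - (Finset.univ.filter
              (fun j => y i ω - y j ω + q * Real.sqrt (σ i ^ 2 + σ j ^ 2) < 0)).card)} ≥
      ℙ {ω : Ω | ∀ i j : Fin n, i ≠ j →
          |(y i ω - μ i) - (y j ω - μ j)| ≤ q * Real.sqrt (σ i ^ 2 + σ j ^ 2)} := by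

  have key : ∀ ω : Ω,
      (∀ i j : Fin n, i ≠ j →
          |(y i ω - μ i) - (y j ω - μ j)| ≤ q * Real.sqrt (σ i ^ 2 + σ j ^ 2)) →
        ∀ i : Fin n,
          (1 + (Finset.univ.filter
              (fun j => 0 < y i ω - y j ω - q * Real.sqrt (σ i ^ 2 + σ j ^ 2))).card ≤
            1 + (Finset.univ.filter (fun j => j ≠ i ∧ μ j < μ i)).card) ∧
          (n - (Finset.univ.filter (fun j => j ≠ i ∧ μ i ≤ μ j)).card ≤
            n - (Finset.univ.filter
              (fun j => y i ω - y j ω + q * Real.sqrt (σ i ^ 2 + σ j ^ 2) < 0)).card) := by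
    intro ω H i
    have hqs : ∀ j : Fin n, 0 < q * Real.sqrt (σ i ^ 2 + σ j ^ 2) := by
      intro j
      have h1 : (0:ℝ) < σ i ^ 2 + σ j ^ 2 := add_pos (pow_pos (hσ i) 2) (pow_pos (hσ j) 2)
      exact mul_pos hq (Real.sqrt_pos.mpr h1)
    constructor
    · have hsub : (Finset.univ.filter
          (fun j => 0 < y i ω - y j ω - q * Real.sqrt (σ i ^ 2 + σ j ^ 2))) ⊆
          (Finset.univ.filter (fun j => j ≠ i ∧ μ j < μ i)) := by
        intro j hj
        simp only [Finset.mem_filter, Finset.mem_univ, true_and] at hj ⊢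
        have hji : j ≠ i := by
          rintro rfl
          have := hqs j
          linarith
        refine ⟨hji, ?_⟩
        have h := H i j (Ne.symm hji)
        have h1 : (y i ω - μ i) - (y j ω - μ j) ≤ q * Real.sqrt (σ i ^ 2 + σ j ^ 2) :=
          (abs_le.mp h).2
        linarith
      exact Nat.add_le_add_left (Finset.card_le_card hsub) 1
    · have hsub : (Finset.univ.filter
          (fun j => y i ω - y j ω + q * Real.sqrt (σ i ^ 2 + σ j ^ 2) < 0)) ⊆
          (Finset.univ.filter (fun j => j ≠ i ∧ μ i ≤ μ j)) := by
        intro j hj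
        simp only [Finset.mem_filter, Finset.mem_univ, true_and] at hj ⊢
        have hji : j ≠ i := by
          rintro rfl
          have := hqs j
          linarith
        refine ⟨hji, ?_⟩
        have h := H i j (Ne.symm hji)
        have h1 : -(q * Real.sqrt (σ i ^ 2 + σ j ^ 2)) ≤ (y i ω - μ i) - (y j ω - μ j) :=
          (abs_le.mp h).1
        linarith
      exact Nat.sub_le_sub_left (Finset.card_le_card hsub) n
  refine ⟨key, ?_⟩
  exact measure_mono (fun ω hω => key ω hω)
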